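/- arXiv:1603.03073 — 9 statements merged into one kernel-verified Lean document; each statement's English description precedes it below -/
import Mathlib

section
/- There exists an instance of house allocation with existing tenants under dichotomous preferences in which the maximum number of satisfied agents over all strongly individually rational allocations is strictly less than the maximum number of satisfied agents over all individually rational allocations. (For example: two agents, each endowed with a house unacceptable to himself, where one agent finds the other agent's house acceptable; the only S-IR allocation is the endowment with welfare 0, while an IR allocation achieves welfare 1.) -/
/-- An instance of house allocation with existing tenants under dichotomous
preferences: an endowment function `ω` assigning each agent at most one house
(no house owned by two distinct agents), and for each agent `i` a set `A i`
of acceptable houses. -/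
structure HAInstance (N H : Type*) where
  ω : N → Option H
  A : N → Set H
  ω_inj : ∀ i j : N, ∀ h : H, ω i = some h → ω j = some h → i = j

/-- An allocation assigns each agent at most one house, no two distinct agents
receiving the same house. -/
def IsAllocation {N H : Type*} (x : N → Option H) : Prop :=
  ∀ i j : N, ∀ h : H, x i = some h → x j = some h → i = j

/-- Agent `i` is satisfied by `x` if he receives an acceptable house. -/
def Satisfied {N H : Type*} (M : HAInstance N H) (x : N → Option H) (i : N) : Prop :=
  ∃ h : H, x i = some h ∧ h ∈ M.A i

/-- The welfare of an allocation: the number of satisfied agents. -/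
noncomputable def Welfare {N H : Type*} (M : HAInstance N H) (x : N → Option H) : ℕ :=
  Nat.card {i : N // Satisfied M x i}

/-- Individual rationality: every agent whose endowed house is acceptable to
him receives an acceptable house. -/
def IR {N H : Type*} (M : HAInstance N H) (x : N → Option H) : Prop :=
  ∀ i : N, (∃ h : H, M.ω i = some h ∧ h ∈ M.A i) → Satisfied M x i

/-- Strong individual rationality: every agent either keeps his endowment or
receives an acceptable house while his endowment was unacceptable. -/
def SIR {N H : Type*} (M : HAInstance N H) (x : N → Option H) : Prop :=
  ∀ i : N, x i = M.ω i ∨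
    (Satisfied M x i ∧ ¬ (∃ h : H, M.ω i = some h ∧ h ∈ M.A i))

/-- Coalition `S` blocks allocation `x`: there is an injective assignment `y`
on `S`, using only houses endowed by members of `S`, such that every member of
`S` gets an acceptable house under `y` while unsatisfied under `x`. -/
def Blocks {N H : Type*} (M : HAInstance N H) (x : N → Option H) (S : Set N) : Prop :=
  S.Nonempty ∧ ∃ y : N → H, Set.InjOn y S ∧
    ∀ i ∈ S, (∃ j ∈ S, M.ω j = some (y i)) ∧ y i ∈ M.A i ∧ ¬ Satisfied M x i

/-- An allocation is core stable if no coalition blocks it. -/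
def CoreStable {N H : Type*} (M : HAInstance N H) (x : N → Option H) : Prop :=
  ∀ S : Set N, ¬ Blocks M x S

/-- `y` Pareto dominates `x` if every agent satisfied by `x` is satisfied by
`y` and some agent is satisfied by `y` but not by `x`. -/
def ParetoDominates {N H : Type*} (M : HAInstance N H) (y x : N → Option H) : Prop :=
  (∀ i : N, Satisfied M x i → Satisfied M y i) ∧
    ∃ i : N, Satisfied M y i ∧ ¬ Satisfied M x i

/-- There is an instance in which some IR allocation has strictly
greater welfare than every S-IR allocation. -/
theorem sir_welfare_lt_ir_welfare :
    ∃ (N H : Type) (_ : Fintype N) (_ : Fintype H) (M : HAInstance N H)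
      (y : N → Option H), IsAllocation y ∧ IR M y ∧
        ∀ x : N → Option H, IsAllocation x → SIR M x →
          Welfare M x < Welfare M y := by
  classical
  set M : HAInstance Bool Bool :=
    ⟨fun i => some i, fun i => {h | i = false ∧ h = true},
      fun i j h hi hj => by
        simp only [Option.some.injEq] at hi hj; exact hi.trans hj.symm⟩ with hM
  refine ⟨Bool, Bool, inferInstance, inferInstance, M,
    fun i => if i then none else some true, ?_, ?_, ?_⟩
  · intro i j h hi hj
    cases i <;> cases j <;> simp_all
  · rintro i ⟨h, hω, hmem⟩
    change some i = some h at hω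
    simp only [Option.some.injEq] at hω
    rcases hmem with ⟨hi, hh⟩
    subst hi; subst hω; exact absurd hh (by simp)
  · intro x hx hsir
    have hW : Welfare M (fun i => if i then none else some true) = 1 := by
      have : ∀ i : Bool, Satisfied M (fun i => if i then none else some true) i ↔ i = false := by
        intro i; cases i <;> simp [Satisfied, M]
      unfold Welfare
      rw [Nat.card_eq_one_iff_unique]
      constructor
      · constructor
        rintro ⟨a, ha⟩ ⟨b, hb⟩
        have ha' := (this a).mp ha
        have hb' := (this b).mp hb
        subst_vars; rfl
      · exact ⟨⟨false, (this false).mpr rfl⟩⟩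
    have hxt : x true = some true := by
      rcases hsir true with h | ⟨⟨h, hxh, hmem⟩, _⟩
      · exact h
      · exact absurd hmem.1 (by simp)
    have hW0 : Welfare M x = 0 := by
      unfold Welfare
      rw [Nat.card_eq_zero]
      left
      constructor
      rintro ⟨i, h, hxi, hmem⟩
      rcases hmem with ⟨hi, hh⟩
      subst hi; subst hh
      exact Bool.false_ne_true (hx false true true hxi hxt)
    rw [hW, hW0]; exact Nat.zero_lt_one
end

section
/- For house allocation with existing tenants under dichotomous (1-0) preferences, any strongly individually rational allocation that maximizes the number of satisfied agents among all strongly individually rational allocations is core stable. -/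
/-- Any S-IR allocation maximizing welfare among S-IR allocations
is core stable. -/
theorem sir_welfare_maximizing_core_stable {N H : Type*} [Fintype N] [Fintype H]
    (M : HAInstance N H) (x : N → Option H)
    (hx : IsAllocation x) (hsir : SIR M x)
    (hmax : ∀ y : N → Option H, IsAllocation y → SIR M y →
      Welfare M y ≤ Welfare M x) :
    CoreStable M x := by
  intro S hB
  obtain ⟨⟨i0, hi0⟩, y, hyinj, hy⟩ := hB
  -- members of S keep their endowment under x
  have hkeep : ∀ i ∈ S, x i = M.ω i := by
    intro i hiS
    rcases hsir i with h | ⟨hs, _⟩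
    · exact h
    · exact absurd hs (hy i hiS).2.2
  classical
  set z : N → Option H := fun i => if i ∈ S then some (y i) else x i with hz
  have hzS : ∀ i ∈ S, z i = some (y i) := fun i hi => by simp [hz, hi]
  have hzN : ∀ i ∉ S, z i = x i := fun i hi => by simp [hz, hi]
  -- z is an allocation
  have hzalloc : IsAllocation z := by
    intro i j h hi hj
    by_cases hiS : i ∈ S <;> by_cases hjS : j ∈ S
    · rw [hzS i hiS] at hi; rw [hzS j hjS] at hj
      exact hyinj hiS hjS (by rw [Option.some_inj.mp hi, Option.some_inj.mp hj])
    · rw [hzS i hiS] at hi; rw [hzN j hjS] at hj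
      obtain ⟨k, hkS, hk⟩ := (hy i hiS).1
      rw [Option.some_inj.mp hi] at hk
      have : x k = some h := by rw [hkeep k hkS, hk]
      exact absurd ((hx j k h hj this) ▸ hkS) hjS
    · rw [hzN i hiS] at hi; rw [hzS j hjS] at hj
      obtain ⟨k, hkS, hk⟩ := (hy j hjS).1
      rw [Option.some_inj.mp hj] at hk
      have : x k = some h := by rw [hkeep k hkS, hk]
      exact absurd ((hx i k h hi this) ▸ hkS) hiS
    · rw [hzN i hiS] at hi; rw [hzN j hjS] at hj
      exact hx i j h hi hj
  -- z is SIR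
  have hzsir : SIR M z := by
    intro i
    by_cases hiS : i ∈ S
    · right
      refine ⟨⟨y i, hzS i hiS, (hy i hiS).2.1⟩, ?_⟩
      rintro ⟨h, hωi, hA⟩
      exact (hy i hiS).2.2 ⟨h, by rw [hkeep i hiS, hωi], hA⟩
    · rcases hsir i with h | ⟨⟨h, hxi, hA⟩, hn⟩
      · left; rw [hzN i hiS, h]
      · right; exact ⟨⟨h, by rw [hzN i hiS]; exact hxi, hA⟩, hn⟩
  -- satisfaction is preserved and strictly improved
  have hmono : ∀ i, Satisfied M x i → Satisfied M z i := by
    intro i hsi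
    by_cases hiS : i ∈ S
    · exact absurd hsi (hy i hiS).2.2
    · obtain ⟨h, hxi, hA⟩ := hsi
      exact ⟨h, by rw [hzN i hiS]; exact hxi, hA⟩
  have hi0z : Satisfied M z i0 := ⟨y i0, hzS i0 hi0, (hy i0 hi0).2.1⟩
  have hi0x : ¬ Satisfied M x i0 := (hy i0 hi0).2.2
  -- welfare strictly increases: contradiction with hmax
  have hlt : Welfare M x < Welfare M z := by
    have hsub : {i : N | Satisfied M x i} ⊂ {i : N | Satisfied M z i} :=
      ⟨fun i hi => hmono i hi, fun hcon => hi0x (hcon hi0z)⟩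
    have := Set.ncard_lt_ncard hsub (Set.toFinite _)
    have e1 : Welfare M x = {i : N | Satisfied M x i}.ncard := by
      rw [Welfare, ← Nat.card_coe_set_eq]; rfl
    have e2 : Welfare M z = {i : N | Satisfied M z i}.ncard := by
      rw [Welfare, ← Nat.card_coe_set_eq]; rfl
    rw [e1, e2]; exact this
  exact absurd (hmax z hzalloc hzsir) (not_le.mpr hlt)
end

section
/- For house allocation with existing tenants under dichotomous (1-0) preferences, the maximum number of satisfied agents over all individually rational allocations equals the maximum number of satisfied agents over all allocations; that is, imposing the individual rationality constraint does not reduce the maximum achievable welfare. -/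
section Aux

variable {N H : Type*}

/-- Number of agents who receive their own acceptable endowment. -/
noncomputable def keepCount (M : HAInstance N H) (x : N → Option H) : ℕ :=
  ({k | ∃ g, M.ω k = some g ∧ g ∈ M.A k ∧ x k = some g}).ncard

noncomputable def score [Fintype N] (M : HAInstance N H) (x : N → Option H) : ℕ :=
  (Fintype.card N + 1) * Welfare M x + keepCount M x

lemma welfare_ncard (M : HAInstance N H) (x : N → Option H) :
    Welfare M x = ({i | Satisfied M x i}).ncard := by
  rw [Welfare, ← Nat.card_coe_set_eq]
  rfl

lemma welfare_le [Fintype N] (M : HAInstance N H) (x : N → Option H) :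
    Welfare M x ≤ Fintype.card N := by
  rw [welfare_ncard]
  calc ({i | Satisfied M x i}).ncard ≤ (Set.univ : Set N).ncard :=
        Set.ncard_le_ncard (Set.subset_univ _) Set.finite_univ
    _ = Fintype.card N := by rw [Set.ncard_univ, Nat.card_eq_fintype_card]

lemma keep_le [Fintype N] (M : HAInstance N H) (x : N → Option H) :
    keepCount M x ≤ Fintype.card N := by
  rw [keepCount]
  calc ({k | ∃ g, M.ω k = some g ∧ g ∈ M.A k ∧ x k = some g}).ncard
      ≤ (Set.univ : Set N).ncard :=
        Set.ncard_le_ncard (Set.subset_univ _) Set.finite_univ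
    _ = Fintype.card N := by rw [Set.ncard_univ, Nat.card_eq_fintype_card]

lemma key_lemma [Fintype N] (M : HAInstance N H) :
    ∃ y : N → Option H, IsAllocation y ∧ IR M y ∧
      ∀ x : N → Option H, IsAllocation x → Welfare M x ≤ Welfare M y := by
  classical
  set n := Fintype.card N with hn
  set S : Set ℕ := {s | ∃ x : N → Option H, IsAllocation x ∧ score M x = s} with hS
  have hne : S.Nonempty := ⟨score M (fun _ => none),
    ⟨fun _ => none, fun i j h hi => by simp at hi, rfl⟩⟩
  have hbdd : BddAbove S := by
    refine ⟨(n+1)*n + n, fun s hs => ?_⟩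
    obtain ⟨x, hx, rfl⟩ := hs
    exact add_le_add (Nat.mul_le_mul_left _ (welfare_le M x)) (keep_le M x)
  obtain ⟨y, hy, hsy⟩ := Nat.sSup_mem hne hbdd
  have hmax : ∀ x : N → Option H, IsAllocation x → score M x ≤ score M y := by
    intro x hx
    rw [hsy]
    exact le_csSup hbdd ⟨x, hx, rfl⟩
  have hWmax : ∀ x : N → Option H, IsAllocation x → Welfare M x ≤ Welfare M y := by
    intro x hx
    by_contra hlt
    push_neg at hlt
    have h1 : score M y < score M x := by
      have h2 : (n+1) * (Welfare M y + 1) ≤ (n+1) * Welfare M x :=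
        Nat.mul_le_mul_left _ hlt
      have h3 : keepCount M y ≤ n := keep_le M y
      calc score M y = (n+1) * Welfare M y + keepCount M y := rfl
        _ < (n+1) * (Welfare M y + 1) := by
            have : (n+1) * (Welfare M y + 1) = (n+1) * Welfare M y + (n+1) := by ring
            omega
        _ ≤ (n+1) * Welfare M x := h2
        _ ≤ score M x := Nat.le_add_right _ _
    exact absurd (hmax x hx) (not_le.mpr h1)
  refine ⟨y, hy, ?_, hWmax⟩
  -- Individual rationality of the score maximizer
  intro i hi
  by_contra hns
  obtain ⟨h, hωi, hhA⟩ := hi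
  have hiKeep : i ∉ {k | ∃ g, M.ω k = some g ∧ g ∈ M.A k ∧ y k = some g} := by
    rintro ⟨g, hg1, hg2, hg3⟩
    exact hns ⟨g, hg3, hg2⟩
  by_cases hex : ∃ j, y j = some h
  · -- Case B: some agent j holds h under y; swap i and j.
    obtain ⟨j, hyj⟩ := hex
    have hij : j ≠ i := by
      rintro rfl
      exact hns ⟨h, hyj, hhA⟩
    set y' : N → Option H := fun k => y (Equiv.swap i j k) with hy'
    have halloc' : IsAllocation y' := by
      intro a b g ha hb
      have := hy _ _ g ha hb
      exact (Equiv.swap i j).injective this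
    have hy'i : y' i = some h := by
      simp only [hy', Equiv.swap_apply_left]
      exact hyj
    have hy'fix : ∀ k, k ≠ i → k ≠ j → y' k = y k := by
      intro k hk1 hk2
      simp only [hy', Equiv.swap_apply_of_ne_of_ne hk1 hk2]
    -- welfare does not decrease
    have hWsub : insert i ({k | Satisfied M y k} \ {j}) ⊆ {k | Satisfied M y' k} := by
      rintro k (rfl | ⟨hk, hkj⟩)
      · exact ⟨h, hy'i, hhA⟩
      · have hki : k ≠ i := fun e => hns (e ▸ hk)
        have hkj' : k ≠ j := hkj
        obtain ⟨g, hg1, hg2⟩ := hk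
        exact ⟨g, (hy'fix k hki hkj').symm ▸ hg1, hg2⟩
    have hW : Welfare M y ≤ Welfare M y' := by
      rw [welfare_ncard, welfare_ncard]
      have hiNot : i ∉ ({k | Satisfied M y k} \ {j}) := fun ⟨hk, _⟩ => hns hk
      have h1 : (insert i ({k | Satisfied M y k} \ {j})).ncard
          = ({k | Satisfied M y k} \ {j}).ncard + 1 :=
        Set.ncard_insert_of_notMem hiNot (Set.toFinite _)
      have h2 : ({k | Satisfied M y k}).ncard
          ≤ (insert i ({k | Satisfied M y k} \ {j})).ncard := by
        by_cases hj : j ∈ {k | Satisfied M y k}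
        · rw [h1, Set.ncard_diff_singleton_add_one hj (Set.toFinite _)]
        · rw [h1, Set.diff_singleton_eq_self hj]
          omega
      exact le_trans h2 (Set.ncard_le_ncard hWsub (Set.toFinite _))
    -- keepCount strictly increases
    have hjKeep : j ∉ {k | ∃ g, M.ω k = some g ∧ g ∈ M.A k ∧ y k = some g} := by
      rintro ⟨g, hg1, hg2, hg3⟩
      rw [hyj] at hg3
      have : h = g := by injection hg3
      subst this
      exact hij (M.ω_inj j i h hg1 hωi)
    have hKsub : insert i {k | ∃ g, M.ω k = some g ∧ g ∈ M.A k ∧ y k = some g}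
        ⊆ {k | ∃ g, M.ω k = some g ∧ g ∈ M.A k ∧ y' k = some g} := by
      rintro k (rfl | hk)
      · exact ⟨h, hωi, hhA, hy'i⟩
      · have hki : k ≠ i := fun e => hiKeep (e ▸ hk)
        have hkj : k ≠ j := fun e => hjKeep (e ▸ hk)
        obtain ⟨g, hg1, hg2, hg3⟩ := hk
        exact ⟨g, hg1, hg2, (hy'fix k hki hkj).symm ▸ hg3⟩
    have hK : keepCount M y + 1 ≤ keepCount M y' := by
      rw [keepCount, keepCount]
      have h1 := Set.ncard_insert_of_notMem hiKeep
        (Set.toFinite {k | ∃ g, M.ω k = some g ∧ g ∈ M.A k ∧ y k = some g})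
      rw [← h1]
      exact Set.ncard_le_ncard hKsub (Set.toFinite _)
    have : score M y < score M y' := by
      have := Nat.mul_le_mul_left (n+1) hW
      simp only [score]
      rw [← hn]
      omega
    exact absurd (hmax y' halloc') (not_le.mpr this)
  · -- Case A: nobody holds h; give h to i.
    push_neg at hex
    classical
    set y' : N → Option H := Function.update y i (some h) with hy'
    have hy'i : y' i = some h := Function.update_self i (some h) y
    have hy'fix : ∀ k, k ≠ i → y' k = y k := fun k hk =>
      Function.update_of_ne hk (some h) y
    have halloc' : IsAllocation y' := by
      intro a b g ha hb
      by_cases hai : a = i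
      · by_cases hbi : b = i
        · rw [hai, hbi]
        · exfalso
          subst hai
          rw [hy'i] at ha
          have : h = g := (by injection ha : h = g)
          subst this
          rw [hy'fix b hbi] at hb
          exact hex b hb
      · by_cases hbi : b = i
        · exfalso
          subst hbi
          rw [hy'i] at hb
          have : h = g := (by injection hb : h = g)
          subst this
          rw [hy'fix a hai] at ha
          exact hex a ha
        · rw [hy'fix a hai] at ha
          rw [hy'fix b hbi] at hb
          exact hy a b g ha hb
    have hWsub : insert i {k | Satisfied M y k} ⊆ {k | Satisfied M y' k} := by
      rintro k (rfl | hk)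
      · exact ⟨h, hy'i, hhA⟩
      · have hki : k ≠ i := fun e => hns (e ▸ hk)
        obtain ⟨g, hg1, hg2⟩ := hk
        exact ⟨g, (hy'fix k hki).symm ▸ hg1, hg2⟩
    have hW : Welfare M y + 1 ≤ Welfare M y' := by
      rw [welfare_ncard, welfare_ncard]
      have h1 := Set.ncard_insert_of_notMem (s := {k | Satisfied M y k})
        hns (Set.toFinite _)
      rw [← h1]
      exact Set.ncard_le_ncard hWsub (Set.toFinite _)
    have hKsub : {k | ∃ g, M.ω k = some g ∧ g ∈ M.A k ∧ y k = some g}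
        ⊆ {k | ∃ g, M.ω k = some g ∧ g ∈ M.A k ∧ y' k = some g} := by
      intro k hk
      have hki : k ≠ i := fun e => hiKeep (e ▸ hk)
      obtain ⟨g, hg1, hg2, hg3⟩ := hk
      exact ⟨g, hg1, hg2, (hy'fix k hki).symm ▸ hg3⟩
    have hK : keepCount M y ≤ keepCount M y' :=
      Set.ncard_le_ncard hKsub (Set.toFinite _)
    have : score M y < score M y' := by
      have h2 : (n+1) * (Welfare M y + 1) ≤ (n+1) * Welfare M y' :=
        Nat.mul_le_mul_left _ hW
      have h3 : (n+1) * (Welfare M y + 1) = (n+1) * Welfare M y + (n+1) := by ring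
      simp only [score]
      rw [← hn]
      omega
    exact absurd (hmax y' halloc') (not_le.mpr this)

end Aux

/-- The maximum welfare over IR allocations equals the maximum
welfare over all allocations. -/
theorem max_ir_welfare_eq_max_welfare {N H : Type*} [Fintype N] [Fintype H]
    (M : HAInstance N H) :
    sSup {w : ℕ | ∃ x : N → Option H, IsAllocation x ∧ IR M x ∧ Welfare M x = w} =
      sSup {w : ℕ | ∃ x : N → Option H, IsAllocation x ∧ Welfare M x = w} := by
  obtain ⟨y, hy, hIR, hmax⟩ := key_lemma M
  have hbddL : BddAbove {w : ℕ | ∃ x : N → Option H,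
      IsAllocation x ∧ IR M x ∧ Welfare M x = w} := by
    refine ⟨Fintype.card N, fun w hw => ?_⟩
    obtain ⟨x, _, _, rfl⟩ := hw
    exact welfare_le M x
  have hbddR : BddAbove {w : ℕ | ∃ x : N → Option H,
      IsAllocation x ∧ Welfare M x = w} := by
    refine ⟨Fintype.card N, fun w hw => ?_⟩
    obtain ⟨x, _, rfl⟩ := hw
    exact welfare_le M x
  have hneL : {w : ℕ | ∃ x : N → Option H,
      IsAllocation x ∧ IR M x ∧ Welfare M x = w}.Nonempty :=
    ⟨Welfare M y, y, hy, hIR, rfl⟩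
  have hneR : {w : ℕ | ∃ x : N → Option H,
      IsAllocation x ∧ Welfare M x = w}.Nonempty :=
    ⟨Welfare M y, y, hy, rfl⟩
  apply le_antisymm
  · exact csSup_le_csSup hbddR hneL (fun w ⟨x, hx, _, hw⟩ => ⟨x, hx, hw⟩)
  · obtain ⟨x, hx, hxw⟩ := Nat.sSup_mem hneR hbddR
    rw [← hxw]
    exact le_trans (hmax x hx) (le_csSup hbddL ⟨y, hy, hIR, rfl⟩)
end

section
/- For house allocation with existing tenants under dichotomous (1-0) preferences, for every allocation x there exists an individually rational allocation y whose number of satisfied agents is at least the number of agents satisfied by x. -/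
/-- For every allocation there is an IR allocation with at least
as much welfare. -/
theorem exists_ir_with_ge_welfare {N H : Type*} [Fintype N] [Fintype H]
    (M : HAInstance N H) (x : N → Option H) (hx : IsAllocation x) :
    ∃ y : N → Option H, IsAllocation y ∧ IR M y ∧
      Welfare M x ≤ Welfare M y := by
  classical
  suffices key : ∀ k (x : N → Option H), IsAllocation x →
      Fintype.card N -
        (Finset.univ.filter (fun j => x j = M.ω j ∧ (M.ω j).isSome)).card ≤ k →
      ∃ y, IsAllocation y ∧ IR M y ∧ Welfare M x ≤ Welfare M y by
    exact key _ x hx le_rfl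
  intro k
  induction k with
  | zero =>
    intro x hxA hm
    refine ⟨x, hxA, ?_, le_rfl⟩
    intro i ⟨h, hωi, hA⟩
    by_contra hns
    -- then i ∉ the filter set, so the filter set is a proper subset of univ
    have hi : i ∉ Finset.univ.filter (fun j => x j = M.ω j ∧ (M.ω j).isSome) := by
      simp only [Finset.mem_filter, Finset.mem_univ, true_and]
      rintro ⟨hxi, -⟩
      exact hns ⟨h, hxi.trans hωi, hA⟩
    have hlt : (Finset.univ.filter (fun j => x j = M.ω j ∧ (M.ω j).isSome)).card
        < Fintype.card N := by
      rw [← Finset.card_univ]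
      exact Finset.card_lt_card ⟨Finset.filter_subset _ _, fun hsub => hi (hsub (Finset.mem_univ i))⟩
    omega
  | succ k ih =>
    intro x hxA hm
    by_cases hIR : IR M x
    · exact ⟨x, hxA, hIR, le_rfl⟩
    rw [IR] at hIR
    push_neg at hIR
    obtain ⟨i, ⟨h, hωi, hA⟩, hns⟩ := hIR
    set y : N → Option H :=
      fun j => if j = i then some h else if x j = some h then none else x j with hy
    have hyi : y i = some h := by simp [hy]
    have hyne : ∀ j, j ≠ i → x j ≠ some h → y j = x j := by
      intro j h1 h2; simp [hy, h1, h2]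
    have hxi_ne : x i ≠ some h := by
      intro hc; exact hns ⟨h, hc, hA⟩
    have hyA : IsAllocation y := by
      intro a b g ha hb
      by_cases hai : a = i <;> by_cases hbi : b = i
      · rw [hai, hbi]
      · exfalso
        rw [hai, hyi] at ha
        have hg : g = h := by injection ha.symm
        by_cases hbh : x b = some h
        · simp [hy, hbi, hbh] at hb
        · rw [hyne b hbi hbh] at hb; rw [hg] at hb; exact hbh hb
      · exfalso
        rw [hbi, hyi] at hb
        have hg : g = h := by injection hb.symm
        by_cases hah : x a = some h
        · simp [hy, hai, hah] at ha
        · rw [hyne a hai hah] at ha; rw [hg] at ha; exact hah ha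
      · by_cases hah : x a = some h
        · simp [hy, hai, hah] at ha
        · by_cases hbh : x b = some h
          · simp [hy, hbi, hbh] at hb
          · exact hxA a b g ((hyne a hai hah) ▸ ha) ((hyne b hbi hbh) ▸ hb)
    have hsati : Satisfied M y i := ⟨h, hyi, hA⟩
    -- welfare does not decrease
    have hwel : Welfare M x ≤ Welfare M y := by
      have : Function.Injective
          (fun p : {j // Satisfied M x j} =>
            if hc : x p.1 = some h then (⟨i, hsati⟩ : {j // Satisfied M y j})
            else ⟨p.1, by
              obtain ⟨g, hg, hgA⟩ := p.2
              have hpi : p.1 ≠ i := by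
                intro hc'; exact hns (hc' ▸ p.2)
              exact ⟨g, (hyne p.1 hpi hc) ▸ hg, hgA⟩⟩) := by
        rintro ⟨a, ha⟩ ⟨b, hb⟩ heq
        by_cases hah : x a = some h <;> by_cases hbh : x b = some h <;>
          simp only [hah, hbh, dif_pos, dif_neg, not_false_iff] at heq
        · exact Subtype.ext (hxA a b h hah hbh)
        · exfalso
          have : b = i := (Subtype.mk.injEq _ _ _ _ ▸ heq).symm
          exact hns (this ▸ hb)
        · exfalso
          have : a = i := (Subtype.mk.injEq _ _ _ _ ▸ heq)
          exact hns (this ▸ ha)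
        · exact Subtype.ext (Subtype.mk.injEq _ _ _ _ ▸ heq)
      exact Nat.card_le_card_of_injective _ this
    -- measure decreases
    have hmeas : Fintype.card N -
        (Finset.univ.filter (fun j => y j = M.ω j ∧ (M.ω j).isSome)).card ≤ k := by
      have hsub : Finset.univ.filter (fun j => x j = M.ω j ∧ (M.ω j).isSome) ⊂
          Finset.univ.filter (fun j => y j = M.ω j ∧ (M.ω j).isSome) := by
        constructor
        · intro j hj
          simp only [Finset.mem_filter, Finset.mem_univ, true_and] at hj ⊢
          obtain ⟨hxj, hsome⟩ := hj
          have hji : j ≠ i := by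
            intro hc
            subst hc
            rw [hωi] at hxj
            exact hns ⟨h, hxj, hA⟩
          have hjh : x j ≠ some h := by
            intro hc
            rw [hxj] at hc
            exact hji (M.ω_inj j i h hc hωi)
          exact ⟨(hyne j hji hjh) ▸ hxj, hsome⟩
        · intro hsub
          have hi' : i ∈ Finset.univ.filter (fun j => y j = M.ω j ∧ (M.ω j).isSome) := by
            simp only [Finset.mem_filter, Finset.mem_univ, true_and]
            exact ⟨hyi.trans hωi.symm, by rw [hωi]; rfl⟩
          have := hsub hi'
          simp only [Finset.mem_filter, Finset.mem_univ, true_and] at this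
          exact hxi_ne (this.1.trans hωi)
      have hc1 := Finset.card_lt_card hsub
      omega
    obtain ⟨z, hzA, hzIR, hwz⟩ := ih y hyA hmeas
    exact ⟨z, hzA, hzIR, hwel.trans hwz⟩
end

section
/- For house allocation with existing tenants under dichotomous (1-0) preferences, any individually rational allocation that maximizes the number of satisfied agents among all individually rational allocations also maximizes the number of satisfied agents among all allocations. -/
/-- Auxiliary: the set of agents who should switch to their own endowment,
given an allocation `y`: agents with an acceptable endowment who are
unsatisfied, closed under chains of displacement. -/
inductive InD {N H : Type*} (M : HAInstance N H) (y : N → Option H) : N → Prop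
  | base (i : N) (h : H) : M.ω i = some h → h ∈ M.A i → ¬ Satisfied M y i → InD M y i
  | step (i k : N) (h h' : H) : M.ω i = some h → h ∈ M.A i → InD M y k →
      M.ω k = some h' → y i = some h' → InD M y i

lemma InD_acc {N H : Type*} {M : HAInstance N H} {y : N → Option H} {i : N}
    (hi : InD M y i) : ∃ h : H, M.ω i = some h ∧ h ∈ M.A i := by
  cases hi with
  | base i h h1 h2 _ => exact ⟨h, h1, h2⟩
  | step i k h h' h1 h2 _ _ _ => exact ⟨h, h1, h2⟩

/-- Any IR allocation maximizing welfare among IR allocations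
maximizes welfare among all allocations. -/
theorem ir_welfare_maximizing_is_welfare_maximizing {N H : Type*}
    [Fintype N] [Fintype H]
    (M : HAInstance N H) (x : N → Option H)
    (hx : IsAllocation x) (hir : IR M x)
    (hmax : ∀ y : N → Option H, IsAllocation y → IR M y →
      Welfare M y ≤ Welfare M x) :
    ∀ y : N → Option H, IsAllocation y → Welfare M y ≤ Welfare M x := by
  intro y hy
  classical
  -- P i : agent i's house under y is the endowment of some agent in D
  set P : N → Prop := fun i => ∃ k h, InD M y k ∧ M.ω k = some h ∧ y i = some h with hP
  -- the repaired allocation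
  set y' : N → Option H := fun i =>
    if InD M y i then M.ω i else if P i then none else y i with hy'
  have hy'D : ∀ i, InD M y i → y' i = M.ω i := by
    intro i hi; simp only [hy', if_pos hi]
  have hy'nD : ∀ i, ¬ InD M y i → ¬ P i → y' i = y i := by
    intro i hi hpi; simp only [hy', if_neg hi, if_neg hpi]
  have hy'P : ∀ i, ¬ InD M y i → P i → y' i = none := by
    intro i hi hpi; simp only [hy', if_neg hi, if_pos hpi]
  -- y' is an allocation
  have halloc : IsAllocation y' := by
    intro i j h hi hj
    by_cases hdi : InD M y i <;> by_cases hdj : InD M y j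
    · rw [hy'D i hdi] at hi; rw [hy'D j hdj] at hj
      exact M.ω_inj i j h hi hj
    · by_cases hpj : P j
      · rw [hy'P j hdj hpj] at hj; exact absurd hj (by simp)
      · rw [hy'D i hdi] at hi; rw [hy'nD j hdj hpj] at hj
        exact absurd ⟨i, h, hdi, hi, hj⟩ hpj
    · by_cases hpi : P i
      · rw [hy'P i hdi hpi] at hi; exact absurd hi (by simp)
      · rw [hy'D j hdj] at hj; rw [hy'nD i hdi hpi] at hi
        exact absurd ⟨j, h, hdj, hj, hi⟩ hpi
    · by_cases hpi : P i
      · rw [hy'P i hdi hpi] at hi; exact absurd hi (by simp)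
      · by_cases hpj : P j
        · rw [hy'P j hdj hpj] at hj; exact absurd hj (by simp)
        · rw [hy'nD i hdi hpi] at hi; rw [hy'nD j hdj hpj] at hj
          exact hy i j h hi hj
  -- InD agents are satisfied by y'
  have hsatD : ∀ i, InD M y i → Satisfied M y' i := by
    intro i hi
    obtain ⟨h, h1, h2⟩ := InD_acc hi
    exact ⟨h, by rw [hy'D i hi]; exact h1, h2⟩
  -- y' is IR
  have hirY : IR M y' := by
    intro i ⟨h, h1, h2⟩
    by_cases hdi : InD M y i
    · exact hsatD i hdi
    · have hsy : Satisfied M y i := by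
        by_contra hns; exact hdi (InD.base i h h1 h2 hns)
      have hpi : ¬ P i := by
        rintro ⟨k, h', hk, hk1, hk2⟩
        exact hdi (InD.step i k h h' h1 h2 hk hk1 hk2)
      obtain ⟨h', h'1, h'2⟩ := hsy
      exact ⟨h', by rw [hy'nD i hdi hpi]; exact h'1, h'2⟩
  -- injection from satisfied-by-y agents to satisfied-by-y' agents
  have hcard : Welfare M y ≤ Welfare M y' := by
    have : ∃ f : {i : N // Satisfied M y i} → {i : N // Satisfied M y' i},
        Function.Injective f := by
      refine ⟨fun a => if hp : P a.1 then ⟨hp.choose, hsatD _ hp.choose_spec.choose_spec.1⟩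
        else ⟨a.1, ?_⟩, ?_⟩
      · by_cases hdi : InD M y a.1
        · exact hsatD a.1 hdi
        · obtain ⟨h, h1, h2⟩ := a.2
          exact ⟨h, by rw [hy'nD a.1 hdi hp]; exact h1, h2⟩
      · rintro ⟨i, hi⟩ ⟨j, hj⟩ hij
        have key : ∀ m : N, ∀ hpm : P m,
            InD M y (hpm.choose) ∧ M.ω (hpm.choose) = y m := by
          intro m hpm
          obtain ⟨h, h1, h2, h3⟩ := hpm.choose_spec
          exact ⟨h1, h2.trans h3.symm⟩
        by_cases hpi : P i <;> by_cases hpj : P j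
        · simp only [dif_pos hpi, dif_pos hpj, Subtype.mk.injEq] at hij
          obtain ⟨_, ei⟩ := key i hpi
          obtain ⟨_, ej⟩ := key j hpj
          rw [hij, ej] at ei
          obtain ⟨h, h1, _⟩ := hi
          exact Subtype.ext (hy i j h h1 (ei.trans h1))
        · simp only [dif_pos hpi, dif_neg hpj, Subtype.mk.injEq] at hij
          exfalso
          obtain ⟨ki, _⟩ := key i hpi
          rw [hij] at ki
          cases ki with
          | base i h h1 h2 h3 => exact h3 hj
          | step i k h h' h1 h2 h3 h4 h5 => exact hpj ⟨k, h', h3, h4, h5⟩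
        · simp only [dif_neg hpi, dif_pos hpj, Subtype.mk.injEq] at hij
          exfalso
          obtain ⟨kj, _⟩ := key j hpj
          rw [← hij] at kj
          cases kj with
          | base i h h1 h2 h3 => exact h3 hi
          | step i k h h' h1 h2 h3 h4 h5 => exact hpi ⟨k, h', h3, h4, h5⟩
        · simp only [dif_neg hpi, dif_neg hpj, Subtype.mk.injEq] at hij
          exact Subtype.ext hij
    obtain ⟨f, hf⟩ := this
    exact Nat.card_le_card_of_injective f hf
  exact le_trans hcard (hmax y' halloc hirY)
end

section
/- There exists an instance of house allocation with existing tenants under dichotomous (1-0) preferences and an individually rational allocation that maximizes the number of satisfied agents among all individually rational allocations but is not core stable. (For example: four agents 1,2,3,4, each endowed with a house unacceptable to himself, where agent 2's house is acceptable to agents 4 and 1, agent 1's house is acceptable to agents 2 and 3, and the allocation giving agent 1's house to agent 3 and agent 2's house to agent 4 is IR and satisfies the maximum number of agents, yet the coalition {1,2} blocks it.) -/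
-- aux
def myA : Fin 4 → Set (Fin 4) := ![{1}, {0}, {0}, {1}]

def myM : HAInstance (Fin 4) (Fin 4) where
  ω := fun i => some i
  A := myA
  ω_inj := by intro i j h hi hj; simp_all

def myx : Fin 4 → Option (Fin 4) := ![none, none, some 0, some 1]

lemma myA_sub : ∀ i h : Fin 4, h ∈ myA i → h = 0 ∨ h = 1 := by
  intro i h hm
  fin_cases i <;> simp [myA] at hm <;> simp [hm]

lemma sat_x_iff (i : Fin 4) : Satisfied myM myx i ↔ (i = 2 ∨ i = 3) := by
  constructor
  · rintro ⟨h, hx, hA⟩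
    fin_cases i <;> simp_all [myx]
  · rintro (rfl | rfl)
    · exact ⟨0, rfl, by simp [myM, myA]⟩
    · exact ⟨1, rfl, by simp [myM, myA]⟩

/-- There exists an instance and an IR welfare-maximizing (among
IR allocations) allocation that is not core stable. -/
theorem exists_ir_welfare_maximizing_not_core_stable :
    ∃ (N H : Type) (_ : Fintype N) (_ : Fintype H) (M : HAInstance N H)
      (x : N → Option H), IsAllocation x ∧ IR M x ∧
        (∀ y : N → Option H, IsAllocation y → IR M y →
          Welfare M y ≤ Welfare M x) ∧
        ¬ CoreStable M x := by
  refine ⟨Fin 4, Fin 4, inferInstance, inferInstance, myM, myx, ?_, ?_, ?_, ?_⟩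
  · intro i j h hi hj
    revert hi hj; revert h; revert i j; decide
  · rintro i ⟨h, hω, hA⟩
    simp only [myM] at hω
    injection hω with e
    subst e
    exfalso; fin_cases i <;> simp [myM, myA] at hA
  · intro y hy _
    have hwx : Welfare myM myx = 2 := by
      have : Welfare myM myx = Nat.card {i : Fin 4 // i = 2 ∨ i = 3} :=
        Nat.card_congr (Equiv.subtypeEquivRight sat_x_iff)
      rw [this, Nat.card_eq_fintype_card]
      decide
    rw [hwx]
    -- injection into Fin 2
    classical
    have key : ∀ s : {i : Fin 4 // Satisfied myM y i},
        y s.1 = some 0 ∨ y s.1 = some 1 := by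
      rintro ⟨i, h, hx, hA⟩
      rcases myA_sub i h hA with rfl | rfl
      · exact Or.inl hx
      · exact Or.inr hx
    have : Function.Injective (fun s : {i : Fin 4 // Satisfied myM y i} =>
        (if y s.1 = some 0 then 0 else 1 : Fin 2)) := by
      intro a b hab
      simp only at hab
      rcases key a with ha | ha <;> rcases key b with hb | hb
      · exact Subtype.ext (hy a.1 b.1 0 ha hb)
      · simp [ha, hb] at hab
      · simp [ha, hb] at hab
      · exact Subtype.ext (hy a.1 b.1 1 ha hb)
    calc Welfare myM y ≤ Nat.card (Fin 2) := Nat.card_le_card_of_injective _ this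
      _ = 2 := by simp
  · intro hcs
    apply hcs {0, 1}
    refine ⟨⟨0, by simp⟩, ![1, 0, 0, 0], ?_, ?_⟩
    · intro a ha b hb hab
      fin_cases a <;> fin_cases b <;> simp_all
    · rintro i (rfl | rfl)
      · exact ⟨⟨1, by simp, rfl⟩, by simp [myM, myA], by simp [Satisfied, myx]⟩
      · exact ⟨⟨0, by simp, rfl⟩, by simp [myM, myA], by simp [Satisfied, myx]⟩
end

section
/- Every instance of house allocation with existing tenants under dichotomous preferences admits an allocation that is simultaneously strongly individually rational, core stable, and maximizes the number of satisfied agents among all strongly individually rational allocations. -/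
/-- Every instance admits an allocation that is S-IR, core
stable, and welfare-maximizing among S-IR allocations. -/
theorem exists_sir_core_stable_welfare_maximizing {N H : Type*}
    [Fintype N] [Fintype H] (M : HAInstance N H) :
    ∃ x : N → Option H, IsAllocation x ∧ SIR M x ∧ CoreStable M x ∧
      ∀ y : N → Option H, IsAllocation y → SIR M y →
        Welfare M y ≤ Welfare M x := by
  classical
  -- the set of SIR allocations, as a subtype
  let T := {x : N → Option H // IsAllocation x ∧ SIR M x}
  have hTne : Nonempty T := ⟨⟨M.ω, M.ω_inj, fun i => Or.inl rfl⟩⟩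
  obtain ⟨x, hx⟩ := Finite.exists_max (fun z : T => Welfare M z.1)
  refine ⟨x.1, x.2.1, x.2.2, ?_, ?_⟩
  · -- core stability
    rintro S ⟨hSne, y, hyinj, hy⟩
    -- members of S keep their endowment under x
    have hxS : ∀ i ∈ S, x.1 i = M.ω i := by
      intro i hi
      rcases x.2.2 i with h | h
      · exact h
      · exact absurd h.1 (hy i hi).2.2
    have hωS : ∀ i ∈ S, ¬ (∃ h : H, M.ω i = some h ∧ h ∈ M.A i) := by
      intro i hi ⟨h, hh, hha⟩
      exact (hy i hi).2.2 ⟨h, (hxS i hi).trans hh, hha⟩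
    set x' : N → Option H := fun i => if i ∈ S then some (y i) else x.1 i with hx'
    have hx'S : ∀ i ∈ S, x' i = some (y i) := fun i hi => if_pos hi
    have hx'nS : ∀ i ∉ S, x' i = x.1 i := fun i hi => if_neg hi
    have halloc : IsAllocation x' := by
      intro i j h hi hj
      by_cases hiS : i ∈ S <;> by_cases hjS : j ∈ S
      · rw [hx'S i hiS] at hi; rw [hx'S j hjS] at hj
        exact hyinj hiS hjS ((Option.some_inj.mp hi).trans (Option.some_inj.mp hj).symm)
      · exfalso
        rw [hx'S i hiS] at hi; rw [hx'nS j hjS] at hj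
        obtain ⟨j', hj'S, hj'ω⟩ := (hy i hiS).1
        have : x.1 j' = some h := by
          rw [hxS j' hj'S, hj'ω, ← Option.some_inj.mp hi]
        exact hjS ((x.2.1 j j' h hj this) ▸ hj'S)
      · exfalso
        rw [hx'S j hjS] at hj; rw [hx'nS i hiS] at hi
        obtain ⟨j', hj'S, hj'ω⟩ := (hy j hjS).1
        have : x.1 j' = some h := by
          rw [hxS j' hj'S, hj'ω, ← Option.some_inj.mp hj]
        exact hiS ((x.2.1 i j' h hi this) ▸ hj'S)
      · rw [hx'nS i hiS] at hi; rw [hx'nS j hjS] at hj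
        exact x.2.1 i j h hi hj
    have hsir : SIR M x' := by
      intro i
      by_cases hiS : i ∈ S
      · exact Or.inr ⟨⟨y i, hx'S i hiS, (hy i hiS).2.1⟩, hωS i hiS⟩
      · rcases x.2.2 i with h | h
        · exact Or.inl ((hx'nS i hiS).trans h)
        · obtain ⟨hh, hne⟩ := h
          obtain ⟨g, hg, hga⟩ := hh
          exact Or.inr ⟨⟨g, (hx'nS i hiS).trans hg, hga⟩, hne⟩
    -- welfare strictly increases, contradiction
    have hsub : {i | Satisfied M x.1 i} ⊂ {i | Satisfied M x' i} := by
      constructor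
      · intro i hi
        by_cases hiS : i ∈ S
        · exact absurd hi ((hy i hiS).2.2)
        · obtain ⟨g, hg, hga⟩ := hi
          exact ⟨g, (hx'nS i hiS).trans hg, hga⟩
      · intro hcon
        obtain ⟨i0, hi0⟩ := hSne
        exact (hy i0 hi0).2.2 (hcon ⟨y i0, hx'S i0 hi0, (hy i0 hi0).2.1⟩)
    have hlt : Welfare M x.1 < Welfare M x' := by
      have := Set.ncard_lt_ncard hsub (Set.toFinite _)
      simpa [Welfare, Set.ncard_eq_toFinset_card', Nat.card_coe_set_eq, Nat.card_eq_fintype_card, Fintype.card_subtype] using this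
    exact absurd (hx ⟨x', halloc, hsir⟩) (not_le.mpr hlt)
  · intro z hz1 hz2
    exact hx ⟨z, hz1, hz2⟩
end

section
/- Every instance of house allocation with existing tenants under dichotomous preferences admits an allocation that is simultaneously individually rational, Pareto optimal, and maximizes the number of satisfied agents among all allocations. -/
section Aux

open Finset

variable {N H : Type*} [Fintype N] [Fintype H] (M : HAInstance N H)

open Classical in
/-- Number of satisfied agents (as a `Finset` count). -/
private noncomputable def Wcnt (z : N → Option H) : ℕ :=
  (Finset.univ.filter fun i => Satisfied M z i).card

open Classical in
/-- Number of satisfied agents whose endowment is acceptable. -/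
private noncomputable def Scnt (z : N → Option H) : ℕ :=
  (Finset.univ.filter fun i =>
    Satisfied M z i ∧ ∃ h, M.ω i = some h ∧ h ∈ M.A i).card

open Classical in
/-- Number of agents keeping an acceptable endowment. -/
private noncomputable def Fcnt (z : N → Option H) : ℕ :=
  (Finset.univ.filter fun i =>
    (∃ h, M.ω i = some h ∧ h ∈ M.A i) ∧ z i = M.ω i).card

private theorem welfare_eq_Wcnt (z : N → Option H) : Welfare M z = Wcnt M z := by
  classical
  simp [Welfare, Wcnt, Nat.card_eq_fintype_card, Fintype.card_subtype]

end Aux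

/-- Every instance admits an allocation that is IR, Pareto
optimal, and welfare-maximizing among all allocations. -/
theorem exists_ir_pareto_optimal_welfare_maximizing {N H : Type*}
    [Fintype N] [Fintype H] (M : HAInstance N H) :
    ∃ x : N → Option H, IsAllocation x ∧ IR M x ∧
      (∀ y : N → Option H, IsAllocation y → ¬ ParetoDominates M y x) ∧
      ∀ y : N → Option H, IsAllocation y → Welfare M y ≤ Welfare M x := by
  classical
  open Finset in
  -- the finset of all allocations
  let s : Finset (N → Option H) := univ.filter IsAllocation
  have hnone : (fun _ => (none : Option H)) ∈ s := by
    refine mem_filter.mpr ⟨mem_univ _, ?_⟩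
    intro i j h hi hj
    simp at hi
  -- stage 1: maximize welfare
  obtain ⟨x1, hx1s, hx1⟩ := s.exists_max_image (Wcnt M) ⟨_, hnone⟩
  let s1 : Finset (N → Option H) := s.filter fun z => Wcnt M z = Wcnt M x1
  -- stage 2: maximize Scnt
  obtain ⟨x2, hx2s, hx2⟩ := s1.exists_max_image (Scnt M)
    ⟨x1, mem_filter.mpr ⟨hx1s, rfl⟩⟩
  let s2 : Finset (N → Option H) := s1.filter fun z => Scnt M z = Scnt M x2
  -- stage 3: maximize Fcnt
  obtain ⟨x, hxs, hxmax⟩ := s2.exists_max_image (Fcnt M)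
    ⟨x2, mem_filter.mpr ⟨hx2s, rfl⟩⟩
  have hxs1 : x ∈ s1 := (mem_filter.mp hxs).1
  have hSx : Scnt M x = Scnt M x2 := (mem_filter.mp hxs).2
  have hxss : x ∈ s := (mem_filter.mp hxs1).1
  have hWx : Wcnt M x = Wcnt M x1 := (mem_filter.mp hxs1).2
  have hxalloc : IsAllocation x := (mem_filter.mp hxss).2
  have hWmax : ∀ y, IsAllocation y → Wcnt M y ≤ Wcnt M x := by
    intro y hy
    rw [hWx]
    exact hx1 y (mem_filter.mpr ⟨mem_univ y, hy⟩)
  have hSmax : ∀ y, IsAllocation y → Wcnt M y = Wcnt M x → Scnt M y ≤ Scnt M x := by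
    intro y hy hWy
    rw [hSx]
    exact hx2 y (mem_filter.mpr ⟨mem_filter.mpr ⟨mem_univ y, hy⟩, hWy.trans hWx⟩)
  have hFmax : ∀ y, IsAllocation y → Wcnt M y = Wcnt M x → Scnt M y = Scnt M x →
      Fcnt M y ≤ Fcnt M x := by
    intro y hy hWy hSy
    exact hxmax y (mem_filter.mpr ⟨mem_filter.mpr ⟨mem_filter.mpr ⟨mem_univ y, hy⟩,
      hWy.trans hWx⟩, hSy.trans hSx⟩)
  -- any allocation strictly enlarging the satisfied set contradicts welfare maximality
  have hstrict : ∀ y, IsAllocation y → (∀ k, Satisfied M x k → Satisfied M y k) →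
      (∃ k, Satisfied M y k ∧ ¬ Satisfied M x k) → False := by
    intro y hy hsub ⟨k, hk1, hk2⟩
    have hlt : Wcnt M x < Wcnt M y := by
      apply card_lt_card
      rw [ssubset_iff_of_subset (fun a ha =>
        mem_filter.mpr ⟨mem_univ a, hsub a (mem_filter.mp ha).2⟩)]
      exact ⟨k, mem_filter.mpr ⟨mem_univ k, hk1⟩, fun hk => hk2 (mem_filter.mp hk).2⟩
    exact absurd (hWmax y hy) (by omega)
  -- individual rationality
  have hIR : IR M x := by
    intro i hi
    by_contra hns
    obtain ⟨h, hωi, hA⟩ := hi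
    have hTi : ∃ g, M.ω i = some g ∧ g ∈ M.A i := ⟨h, hωi, hA⟩
    have hxi : x i ≠ some h := fun e => hns ⟨h, e, hA⟩
    by_cases hj : ∃ j, x j = some h
    · -- the acceptable endowment of i is currently held by j
      obtain ⟨j, hxj⟩ := hj
      have hji : j ≠ i := fun e => hxi (e ▸ hxj)
      set x' : N → Option H := fun k => if k = i then some h else if k = j then x i else x k
        with hx'def
      have hx'i : x' i = some h := by simp [hx'def]
      have hx'j : x' j = x i := by simp [hx'def, hji]
      have hx'k : ∀ k, k ≠ i → k ≠ j → x' k = x k := by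
        intro k h1 h2; simp [hx'def, h1, h2]
      have key : ∀ a g, x' a = some g →
          (a = i ∧ g = h) ∨ (a = j ∧ x i = some g) ∨ (a ≠ i ∧ a ≠ j ∧ x a = some g) := by
        intro a g ha
        by_cases hai : a = i
        · subst hai
          rw [hx'i] at ha
          exact Or.inl ⟨rfl, (Option.some.inj ha).symm⟩
        · by_cases haj : a = j
          · subst haj
            exact Or.inr (Or.inl ⟨rfl, by rwa [hx'j] at ha⟩)
          · exact Or.inr (Or.inr ⟨hai, haj, by rwa [hx'k a hai haj] at ha⟩)
      have halloc' : IsAllocation x' := by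
        intro a b g ha hb
        rcases key a g ha with ⟨e1, e2⟩ | ⟨e1, e2⟩ | ⟨e1, e2, e3⟩ <;>
          rcases key b g hb with ⟨f1, f2⟩ | ⟨f1, f2⟩ | ⟨f1, f2, f3⟩
        · rw [e1, f1]
        · exact absurd (e2 ▸ f2) hxi
        · exact absurd (hxalloc b j h (e2 ▸ f3) hxj) f2
        · exact absurd (f2 ▸ e2) hxi
        · rw [e1, f1]
        · exact absurd (hxalloc b i g f3 e2) f1
        · exact absurd (hxalloc a j h (f2 ▸ e3) hxj) e2
        · exact absurd (hxalloc a i g e3 f2) e1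
        · exact hxalloc a b g e3 f3
      have hsat'i : Satisfied M x' i := ⟨h, hx'i, hA⟩
      have hsat'k : ∀ k, k ≠ i → k ≠ j → (Satisfied M x' k ↔ Satisfied M x k) := by
        intro k h1 h2
        unfold Satisfied
        rw [hx'k k h1 h2]
      by_cases hsj : Satisfied M x j
      · have hhAj : h ∈ M.A j := by
          obtain ⟨g, hg1, hg2⟩ := hsj
          rw [hxj] at hg1
          exact (Option.some.inj hg1).symm ▸ hg2
        by_cases hsj' : Satisfied M x' j
        · -- everyone stays satisfied and i becomes satisfied : welfare increases
          refine hstrict x' halloc' (fun k hk => ?_) ⟨i, hsat'i, hns⟩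
          by_cases h1 : k = i
          · exact absurd (h1 ▸ hk) hns
          · by_cases h2 : k = j
            · exact h2 ▸ hsj'
            · exact (hsat'k k h1 h2).mpr hk
        · -- the genuine swap case : welfare stays equal
          have hmemj : j ∈ univ.filter fun k => Satisfied M x k :=
            mem_filter.mpr ⟨mem_univ j, hsj⟩
          have hWset : (univ.filter fun k => Satisfied M x' k) =
              insert i ((univ.filter fun k => Satisfied M x k).erase j) := by
            ext k
            simp only [mem_insert, mem_erase, mem_filter, mem_univ, true_and]
            by_cases h1 : k = i
            · subst h1; simp [hsat'i]
            · by_cases h2 : k = j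
              · subst h2; simp [hsj', h1]
              · rw [hsat'k k h1 h2]; simp [h1, h2]
          have hWeq : Wcnt M x' = Wcnt M x := by
            have hni : i ∉ (univ.filter fun k => Satisfied M x k).erase j := by
              intro hmem
              exact hns (mem_filter.mp (mem_erase.mp hmem).2).2
            have h1 : 1 ≤ (univ.filter fun k => Satisfied M x k).card :=
              card_pos.mpr ⟨j, hmemj⟩
            unfold Wcnt
            rw [hWset, card_insert_of_notMem hni, card_erase_of_mem hmemj]
            omega
          by_cases hjT : ∃ g, M.ω j = some g ∧ g ∈ M.A j
          · -- j also has an acceptable endowment : Fcnt increases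
            have hSset : (univ.filter fun k => Satisfied M x' k ∧ ∃ g, M.ω k = some g ∧ g ∈ M.A k) =
                insert i ((univ.filter fun k => Satisfied M x k ∧ ∃ g, M.ω k = some g ∧ g ∈ M.A k).erase j) := by
              ext k
              simp only [mem_insert, mem_erase, mem_filter, mem_univ, true_and]
              by_cases h1 : k = i
              · subst h1; simp [hsat'i, hTi]
              · by_cases h2 : k = j
                · subst h2; simp [hsj', h1]
                · rw [hsat'k k h1 h2]; simp [h1, h2]
            have hSeq : Scnt M x' = Scnt M x := by
              have hmemjS : j ∈ univ.filter fun k =>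
                  Satisfied M x k ∧ ∃ g, M.ω k = some g ∧ g ∈ M.A k :=
                mem_filter.mpr ⟨mem_univ j, hsj, hjT⟩
              have hni : i ∉ (univ.filter fun k =>
                  Satisfied M x k ∧ ∃ g, M.ω k = some g ∧ g ∈ M.A k).erase j := by
                intro hmem
                exact hns (mem_filter.mp (mem_erase.mp hmem).2).2.1
              have h1 : 1 ≤ (univ.filter fun k =>
                  Satisfied M x k ∧ ∃ g, M.ω k = some g ∧ g ∈ M.A k).card :=
                card_pos.mpr ⟨j, hmemjS⟩
              unfold Scnt
              rw [hSset, card_insert_of_notMem hni, card_erase_of_mem hmemjS]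
              omega
            have hFset : (univ.filter fun k =>
                (∃ g, M.ω k = some g ∧ g ∈ M.A k) ∧ x' k = M.ω k) =
                insert i (univ.filter fun k =>
                  (∃ g, M.ω k = some g ∧ g ∈ M.A k) ∧ x k = M.ω k) := by
              ext k
              simp only [mem_insert, mem_filter, mem_univ, true_and]
              by_cases h1 : k = i
              · subst h1
                simp [hTi, hx'i.trans hωi.symm]
              · by_cases h2 : k = j
                · subst h2
                  constructor
                  · rintro ⟨⟨g, hg1, hg2⟩, he⟩
                    exact absurd ⟨g, he.trans hg1, hg2⟩ hsj'
                  · rintro (h' | ⟨_, he⟩)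
                    · exact absurd h' h1
                    · exact absurd (M.ω_inj _ i h (he ▸ hxj) hωi) h1
                · rw [hx'k k h1 h2]
                  simp [h1]
            have hFgt : Fcnt M x' = Fcnt M x + 1 := by
              have hni : i ∉ univ.filter fun k =>
                  (∃ g, M.ω k = some g ∧ g ∈ M.A k) ∧ x k = M.ω k := by
                intro hmem
                exact hxi ((mem_filter.mp hmem).2.2.trans hωi)
              unfold Fcnt
              rw [hFset, card_insert_of_notMem hni]
            have := hFmax x' halloc' hWeq hSeq
            omega
          · -- j's endowment is unacceptable : Scnt increases
            have hSset : (univ.filter fun k => Satisfied M x' k ∧ ∃ g, M.ω k = some g ∧ g ∈ M.A k) =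
                insert i (univ.filter fun k => Satisfied M x k ∧ ∃ g, M.ω k = some g ∧ g ∈ M.A k) := by
              ext k
              simp only [mem_insert, mem_filter, mem_univ, true_and]
              by_cases h1 : k = i
              · subst h1; simp [hsat'i, hTi]
              · by_cases h2 : k = j
                · subst h2; simp [hsj', hjT, h1]
                · rw [hsat'k k h1 h2]; simp [h1]
            have hSgt : Scnt M x' = Scnt M x + 1 := by
              have hni : i ∉ univ.filter fun k =>
                  Satisfied M x k ∧ ∃ g, M.ω k = some g ∧ g ∈ M.A k := by
                intro hmem
                exact hns (mem_filter.mp hmem).2.1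
              unfold Scnt
              rw [hSset, card_insert_of_notMem hni]
            have := hSmax x' halloc' hWeq
            omega
      · -- j was not satisfied anyway : welfare increases
        refine hstrict x' halloc' (fun k hk => ?_) ⟨i, hsat'i, hns⟩
        by_cases h1 : k = i
        · exact absurd (h1 ▸ hk) hns
        · by_cases h2 : k = j
          · exact absurd (h2 ▸ hk) hsj
          · exact (hsat'k k h1 h2).mpr hk
    · -- i's endowment is free : give it to i, welfare increases
      push_neg at hj
      set x' : N → Option H := fun k => if k = i then some h else x k with hx'def
      have hx'i : x' i = some h := by simp [hx'def]
      have hx'k : ∀ k, k ≠ i → x' k = x k := by intro k h1; simp [hx'def, h1]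
      have halloc' : IsAllocation x' := by
        intro a b g ha hb
        by_cases hai : a = i <;> by_cases hbi : b = i
        · rw [hai, hbi]
        · subst hai
          rw [hx'i] at ha
          rw [hx'k b hbi] at hb
          exact absurd ((Option.some.inj ha) ▸ hb) (hj b)
        · subst hbi
          rw [hx'i] at hb
          rw [hx'k a hai] at ha
          exact absurd ((Option.some.inj hb) ▸ ha) (hj a)
        · rw [hx'k a hai] at ha
          rw [hx'k b hbi] at hb
          exact hxalloc a b g ha hb
      refine hstrict x' halloc' (fun k hk => ?_) ⟨i, ⟨h, hx'i, hA⟩, hns⟩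
      by_cases h1 : k = i
      · exact absurd (h1 ▸ hk) hns
      · unfold Satisfied
        rw [hx'k k h1]
        exact hk
  refine ⟨x, hxalloc, hIR, ?_, ?_⟩
  · intro y hy hdom
    obtain ⟨hsub, i0, h1, h2⟩ := hdom
    exact hstrict y hy hsub ⟨i0, h1, h2⟩
  · intro y hy
    rw [welfare_eq_Wcnt, welfare_eq_Wcnt]
    exact hWmax y hy
end

section
/- Every instance of house allocation with existing tenants under dichotomous preferences admits a core-stable allocation; in particular, the core is nonempty. -/
/-- Every instance admits a core-stable allocation. -/
theorem exists_core_stable_allocation {N H : Type*}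
    [Fintype N] [Fintype H] (M : HAInstance N H) :
    ∃ x : N → Option H, IsAllocation x ∧ CoreStable M x := by
  classical
  -- class D : allocations where unsatisfied agents keep their endowment
  set P : (N → Option H) → Prop :=
    fun x => IsAllocation x ∧ ∀ i, ¬ Satisfied M x i → x i = M.ω i with hP
  have hPω : P M.ω := ⟨M.ω_inj, fun _ _ => rfl⟩
  set s : Finset (N → Option H) := Finset.univ.filter P with hs
  have hωs : M.ω ∈ s := Finset.mem_filter.mpr ⟨Finset.mem_univ _, hPω⟩
  obtain ⟨x, hxs, hxmax⟩ := s.exists_max_image (Welfare M) ⟨M.ω, hωs⟩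
  have hPx : P x := by simpa [hs] using hxs
  obtain ⟨hxalloc, hxD⟩ := hPx
  refine ⟨x, hxalloc, fun S hS => ?_⟩
  obtain ⟨⟨i₀, hi₀⟩, y, hyinj, hy⟩ := hS
  -- key: no agent outside S holds a coalition house under x
  have key : ∀ j, j ∉ S → ∀ i ∈ S, x j ≠ some (y i) := by
    intro j hj i hi hxj
    obtain ⟨⟨j', hj'S, hωj'⟩, _, _⟩ := hy i hi
    have hxj' : x j' = some (y i) := by
      rw [hxD j' (hy j' hj'S).2.2]; exact hωj'
    exact hj (hxalloc j j' (y i) hxj hxj' ▸ hj'S)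
  -- the improved allocation
  set x' : N → Option H := fun i => if i ∈ S then some (y i) else x i with hx'
  have hx'S : ∀ i ∈ S, x' i = some (y i) := fun i hi => by simp [hx', hi]
  have hx'nS : ∀ i, i ∉ S → x' i = x i := fun i hi => by simp [hx', hi]
  have hx'alloc : IsAllocation x' := by
    intro i j h hi hj
    by_cases hiS : i ∈ S <;> by_cases hjS : j ∈ S
    · rw [hx'S i hiS, Option.some_inj] at hi
      rw [hx'S j hjS, Option.some_inj] at hj
      exact hyinj hiS hjS (hi.trans hj.symm)
    · rw [hx'S i hiS, Option.some_inj] at hi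
      rw [hx'nS j hjS] at hj
      exact absurd (hi ▸ hj) (key j hjS i hiS)
    · rw [hx'S j hjS, Option.some_inj] at hj
      rw [hx'nS i hiS] at hi
      exact absurd (hj ▸ hi) (key i hiS j hjS)
    · rw [hx'nS i hiS] at hi
      rw [hx'nS j hjS] at hj
      exact hxalloc i j h hi hj
  have hsatS : ∀ i ∈ S, Satisfied M x' i := by
    intro i hi
    exact ⟨y i, hx'S i hi, (hy i hi).2.1⟩
  have hPx' : P x' := by
    refine ⟨hx'alloc, fun i hi => ?_⟩
    by_cases hiS : i ∈ S
    · exact absurd (hsatS i hiS) hi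
    · rw [hx'nS i hiS]
      refine hxD i fun h => hi ?_
      obtain ⟨hh, hxi, hA⟩ := h
      exact ⟨hh, (hx'nS i hiS).trans hxi, hA⟩
  have hx's : x' ∈ s := Finset.mem_filter.mpr ⟨Finset.mem_univ _, hPx'⟩
  have hmono : ∀ i, Satisfied M x i → Satisfied M x' i := by
    intro i hi
    by_cases hiS : i ∈ S
    · exact hsatS i hiS
    · rwa [Satisfied, hx'nS i hiS]
  have hlt : Welfare M x < Welfare M x' := by
    have h1 : {i | Satisfied M x i} ⊂ {i | Satisfied M x' i} := by
      refine ⟨fun i hi => hmono i hi, fun hsub => ?_⟩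
      exact (hy i₀ hi₀).2.2 (hsub (hsatS i₀ hi₀))
    have := Set.ncard_lt_ncard h1 (Set.toFinite _)
    rw [← Nat.card_coe_set_eq, ← Nat.card_coe_set_eq] at this
    exact this
  exact absurd (hxmax x' hx's) (not_le.mpr hlt)
end
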